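/- For real s > 1 and integers p₁, p₂ ≥ 2: ∑_{i=0}^{p₂-1} C(p₁-1+i, i) ζ(p₁+i, p₂-i, s) + ∑_{i=0}^{p₁-1} C(p₂-1+i, i) ∑_{l,m,n≥1} (l+m+n)^{-(p₂+i)} l^{-(p₁-i)} m^{-s} = ζ(p₁, p₂, s) + ζ(p₂, p₁, s) + ζ(p₂, s, p₁) + ζ(p₁+p₂, s) + ζ(p₂, p₁+s). -/

import Mathlib

/-- The double zeta function `ζ(s₁, s₂) = ∑_{m₁ > m₂ > 0} m₁^{-s₁} m₂^{-s₂}`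
with real arguments. -/
noncomputable def zr2 (s₁ s₂ : ℝ) : ℝ :=
  ∑' (a : ℕ) (b : ℕ),
    ((a : ℝ) + (b : ℝ) + 2) ^ (-s₁) * ((b : ℝ) + 1) ^ (-s₂)

/-- The triple zeta function `ζ(s₁, s₂, s₃) = ∑_{m₁ > m₂ > m₃ > 0} ∏ m_j^{-s_j}`
with real arguments. -/
noncomputable def zr3 (s₁ s₂ s₃ : ℝ) : ℝ :=
  ∑' (a : ℕ) (b : ℕ) (c : ℕ),
    ((a : ℝ) + (b : ℝ) + (c : ℝ) + 3) ^ (-s₁) *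
      ((b : ℝ) + (c : ℝ) + 2) ^ (-s₂) * ((c : ℝ) + 1) ^ (-s₃)



open Finset

lemma aux_pascal (u : ℝ) (q p : ℕ) :
    (1 - u) * ∑ i ∈ range (p + 1), (Nat.choose (q + 1 + i) i : ℝ) * u ^ i =
      (∑ i ∈ range (p + 1), (Nat.choose (q + i) i : ℝ) * u ^ i)
        - (Nat.choose (q + 1 + p) p : ℝ) * u ^ (p + 1) := by
  induction p with
  | zero => simp
  | succ p ih =>
      rw [sum_range_succ, sum_range_succ (f := fun i => (Nat.choose (q + i) i : ℝ) * u ^ i)]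
      have pasN : (q + 1 + p + 1).choose (p+1) = (q + 1 + p).choose p + (q + p + 1).choose (p+1) := by
        have h3 : q + 1 + p = q + p + 1 := by omega
        rw [show q + 1 + p + 1 = (q + 1 + p) + 1 from rfl, Nat.choose_succ_succ, h3]
      have pas : (Nat.choose (q + 1 + p + 1) (p+1) : ℝ)
          = (Nat.choose (q + 1 + p) p : ℝ) + (Nat.choose (q + p + 1) (p+1) : ℝ) := by
        exact_mod_cast congrArg (Nat.cast : ℕ → ℝ) pasN
      have e1 : q + 1 + (p + 1) = q + 1 + p + 1 := by ring
      have e2 : q + (p + 1) = q + p + 1 := by ring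
      rw [e1, e2]
      linear_combination ih + u^(p+1) * pas

lemma key_poly (u : ℝ) (p q : ℕ) :
    u ^ (p+1) * (∑ i ∈ range (q+1), (Nat.choose (p + i) i : ℝ) * (1 - u) ^ i)
      + (1 - u) ^ (q+1) * (∑ i ∈ range (p+1), (Nat.choose (q + i) i : ℝ) * u ^ i) = 1 := by
  induction q with
  | zero =>
      simp only [zero_add, range_one, sum_singleton, pow_zero, Nat.choose_zero_right,
        Nat.cast_one, one_mul, mul_one, Nat.add_zero, Nat.zero_add, Nat.choose_self, pow_one]
      have g := geom_sum_mul u (p+1)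
      linear_combination -g
  | succ q ih =>
      rw [sum_range_succ (f := fun i => (Nat.choose (p + i) i : ℝ) * (1 - u) ^ i)]
      have ap := aux_pascal u q p
      have symN : (q + 1 + p).choose p = (p + (q+1)).choose (q+1) := by
        have h := Nat.choose_symm (Nat.le_add_right p (q+1))
        rw [Nat.add_sub_cancel_left] at h
        rw [show q + 1 + p = p + (q+1) from by omega]
        exact h.symm
      have sym : (Nat.choose (q + 1 + p) p : ℝ) = (Nat.choose (p + (q+1)) (q+1) : ℝ) := by
        exact_mod_cast congrArg (Nat.cast : ℕ → ℝ) symN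
      linear_combination ih + (1-u)^(q+1) * ap - u^(p+1)*(1-u)^(q+1) * sym

/-- Euler's partial fraction decomposition, rpow form. -/
lemma pf_id (x y : ℝ) (hx : 0 < x) (hy : 0 < y) (P Q : ℕ) :
    x ^ (-((P+1:ℕ):ℝ)) * y ^ (-((Q+1:ℕ):ℝ)) =
      (∑ i ∈ range (Q+1), (Nat.choose (P+i) i : ℝ) *
        ((x+y) ^ (-((P+1+i:ℕ):ℝ)) * y ^ (-((Q+1-i:ℕ):ℝ)))) +
      (∑ i ∈ range (P+1), (Nat.choose (Q+i) i : ℝ) *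
        ((x+y) ^ (-((Q+1+i:ℕ):ℝ)) * x ^ (-((P+1-i:ℕ):ℝ)))) := by
  have hxy : 0 < x + y := by linarith
  have key := key_poly (x/(x+y)) P Q
  have h1u : 1 - x/(x+y) = y/(x+y) := by field_simp; ring
  rw [h1u] at key
  have hx' : ∀ n : ℕ, x ^ (-(n:ℝ)) = (x^n)⁻¹ := fun n => by
    rw [Real.rpow_neg hx.le, Real.rpow_natCast]
  have hy' : ∀ n : ℕ, y ^ (-(n:ℝ)) = (y^n)⁻¹ := fun n => by
    rw [Real.rpow_neg hy.le, Real.rpow_natCast]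
  have hxy' : ∀ n : ℕ, (x+y) ^ (-(n:ℝ)) = ((x+y)^n)⁻¹ := fun n => by
    rw [Real.rpow_neg hxy.le, Real.rpow_natCast]
  simp only [hx', hy', hxy']
  have e1 : ((x^(P+1))⁻¹ * (y^(Q+1))⁻¹) *
      ((x/(x+y))^(P+1) * ∑ i ∈ range (Q+1), (Nat.choose (P+i) i : ℝ) * (y/(x+y))^i)
      = ∑ i ∈ range (Q+1), (Nat.choose (P+i) i : ℝ) *
          (((x+y)^(P+1+i))⁻¹ * (y^(Q+1-i))⁻¹) := by
    rw [← mul_assoc, Finset.mul_sum]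
    refine Finset.sum_congr rfl fun i hi => ?_
    have hiQ : i ≤ Q := by simpa [Nat.lt_succ_iff] using hi
    obtain ⟨j, hj⟩ : ∃ j, Q = i + j := ⟨Q - i, by omega⟩
    subst hj
    rw [show i + j + 1 - i = j + 1 from by omega]
    rw [div_pow, div_pow]
    field_simp
    ring
  have e2 : ((x^(P+1))⁻¹ * (y^(Q+1))⁻¹) *
      ((y/(x+y))^(Q+1) * ∑ i ∈ range (P+1), (Nat.choose (Q+i) i : ℝ) * (x/(x+y))^i)
      = ∑ i ∈ range (P+1), (Nat.choose (Q+i) i : ℝ) *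
          (((x+y)^(Q+1+i))⁻¹ * (x^(P+1-i))⁻¹) := by
    rw [← mul_assoc, Finset.mul_sum]
    refine Finset.sum_congr rfl fun i hi => ?_
    have hiP : i ≤ P := by simpa [Nat.lt_succ_iff] using hi
    obtain ⟨j, hj⟩ : ∃ j, P = i + j := ⟨P - i, by omega⟩
    subst hj
    rw [show i + j + 1 - i = j + 1 from by omega]
    rw [div_pow, div_pow]
    field_simp
    ring
  calc (x^(P+1))⁻¹ * (y^(Q+1))⁻¹
      = ((x^(P+1))⁻¹ * (y^(Q+1))⁻¹) *
        ((x/(x+y))^(P+1) * ∑ i ∈ range (Q+1), (Nat.choose (P+i) i : ℝ) * (y/(x+y))^i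
          + (y/(x+y))^(Q+1) * ∑ i ∈ range (P+1), (Nat.choose (Q+i) i : ℝ) * (x/(x+y))^i) := by
        rw [key, mul_one]
    _ = _ := by rw [mul_add, e1, e2]

open Finset ENNReal
open scoped ENNReal

noncomputable def E (x t : ℝ) : ℝ≥0∞ := ENNReal.ofReal (x ^ (-t))

lemma E_congr {x y : ℝ} (t : ℝ) (h : x = y) : E x t = E y t := by rw [h]

lemma E_mul_same {x : ℝ} (hx : 0 < x) (a b : ℝ) : E x a * E x b = E x (a + b) := by
  rw [E, E, E, ← ENNReal.ofReal_mul (Real.rpow_nonneg hx.le _), neg_add,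
    Real.rpow_add hx]

lemma E_le {x y t : ℝ} (hx : 0 < x) (hxy : x ≤ y) (ht : 0 ≤ t) : E y t ≤ E x t := by
  have hy : 0 < y := lt_of_lt_of_le hx hxy
  apply ENNReal.ofReal_le_ofReal
  rw [Real.rpow_neg hx.le, Real.rpow_neg hy.le]
  exact inv_anti₀ (Real.rpow_pos_of_pos hx t) (Real.rpow_le_rpow hx.le hxy ht)

/-- Transfer: real tsum of a nonneg function as toReal of the `ℝ≥0∞` tsum. -/
lemma tsum_ofReal_eq {g : ℕ → ℝ} (hg : ∀ i, 0 ≤ g i) :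
    ∑' i, g i = (∑' i, ENNReal.ofReal (g i)).toReal := by
  by_cases hsum : Summable g
  · rw [← ENNReal.ofReal_tsum_of_nonneg hg hsum, ENNReal.toReal_ofReal (tsum_nonneg hg)]
  · rw [tsum_eq_zero_of_not_summable hsum]
    by_cases htop : (∑' i, ENNReal.ofReal (g i)) = ∞
    · rw [htop]; simp
    · exact absurd ((ENNReal.summable_toReal htop).congr
        (fun i => ENNReal.toReal_ofReal (hg i))) hsum

lemma transfer2 (f : ℕ → ℕ → ℝ) (hf : ∀ a b, 0 ≤ f a b)
    (h : (∑' (a : ℕ) (b : ℕ), ENNReal.ofReal (f a b)) ≠ ∞) :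
    ∑' (a : ℕ) (b : ℕ), f a b = (∑' (a : ℕ) (b : ℕ), ENNReal.ofReal (f a b)).toReal := by
  have h1 : ∀ a, (∑' b, ENNReal.ofReal (f a b)) ≠ ∞ :=
    fun a => ne_top_of_le_ne_top h (ENNReal.le_tsum a)
  rw [ENNReal.tsum_toReal_eq (fun a => h1 a)]
  exact tsum_congr fun a => tsum_ofReal_eq (hf a) |>.trans
    (by rw [ENNReal.tsum_toReal_eq (fun b => ENNReal.ofReal_ne_top)])

lemma transfer3 (f : ℕ → ℕ → ℕ → ℝ) (hf : ∀ a b c, 0 ≤ f a b c)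
    (h : (∑' (a : ℕ) (b : ℕ) (c : ℕ), ENNReal.ofReal (f a b c)) ≠ ∞) :
    ∑' (a : ℕ) (b : ℕ) (c : ℕ), f a b c
      = (∑' (a : ℕ) (b : ℕ) (c : ℕ), ENNReal.ofReal (f a b c)).toReal := by
  have h1 : ∀ a, (∑' (b : ℕ) (c : ℕ), ENNReal.ofReal (f a b c)) ≠ ∞ :=
    fun a => ne_top_of_le_ne_top h (ENNReal.le_tsum a)
  rw [ENNReal.tsum_toReal_eq (fun a => h1 a)]
  exact tsum_congr fun a => transfer2 (f a) (hf a) (h1 a)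

lemma zeta_ne_top {t : ℝ} (ht : 1 < t) : (∑' n : ℕ, E ((n:ℝ)+1) t) ≠ ∞ := by
  have hsum : Summable (fun n : ℕ => ((n:ℝ)+1) ^ (-t)) := by
    have h0 : Summable (fun n : ℕ => 1 / (n:ℝ) ^ t) := Real.summable_one_div_nat_rpow.2 ht
    have h1 : Summable (fun n : ℕ => 1 / ((n+1 : ℕ):ℝ) ^ t) :=
      (summable_nat_add_iff 1).2 h0
    apply h1.congr
    intro n
    rw [Real.rpow_neg (by positivity), one_div]
    congr 2
    push_cast; ring
  simp only [E]
  rw [← ENNReal.ofReal_tsum_of_nonneg (fun n => Real.rpow_nonneg (by positivity) _) hsum]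
  exact ENNReal.ofReal_ne_top

/-- Splitting an `ℝ≥0∞` series at `M`. -/
lemma tsum_split (f : ℕ → ℝ≥0∞) (M : ℕ) :
    ∑' k, f k = (∑ k ∈ range M, f k) + ∑' k, f (k + M) := by
  induction M with
  | zero => simp
  | succ M ih =>
      rw [ih, sum_range_succ, add_assoc]
      congr 1
      rw [tsum_eq_zero_add' ENNReal.summable]
      congr 1
      · simp
      · exact tsum_congr fun n => by rw [show n + 1 + M = n + (M+1) from by omega]

/-- Triangle reindexing in `ℝ≥0∞`. -/
lemma tsum_triangle (h : ℕ → ℕ → ℝ≥0∞) :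
    ∑' b : ℕ, ∑ j ∈ range b, h b j = ∑' (j : ℕ) (a : ℕ), h (a + j + 1) j := by
  have e1 : ∀ b : ℕ, ∑ j ∈ range b, h b j = ∑' j : ℕ, if j < b then h b j else 0 := by
    intro b
    rw [tsum_eq_sum (s := range b) (fun j hj => if_neg (by simpa using hj))]
    exact (Finset.sum_congr rfl fun j hj => if_pos (by simpa using hj)).symm
  calc ∑' b : ℕ, ∑ j ∈ range b, h b j
      = ∑' (b : ℕ) (j : ℕ), if j < b then h b j else 0 := tsum_congr e1
    _ = ∑' (j : ℕ) (b : ℕ), if j < b then h b j else 0 := ENNReal.tsum_comm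
    _ = ∑' (j : ℕ) (a : ℕ), h (a + j + 1) j := by
        refine tsum_congr fun j => ?_
        rw [tsum_split (fun b => if j < b then h b j else 0) (j+1)]
        have : (∑ k ∈ range (j+1), if j < k then h k j else 0) = 0 :=
          Finset.sum_eq_zero fun k hk => if_neg (by simp at hk; omega)
        rw [this, zero_add]
        exact tsum_congr fun a => by rw [if_pos (by omega), show a + (j+1) = a + j + 1 from by omega]

noncomputable def F3 (s₁ s₂ s₃ : ℝ) : ℝ≥0∞ :=
  ∑' (a : ℕ) (b : ℕ) (c : ℕ),
    E ((a:ℝ)+(b:ℝ)+(c:ℝ)+3) s₁ * E ((b:ℝ)+(c:ℝ)+2) s₂ * E ((c:ℝ)+1) s₃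

noncomputable def F2 (s₁ s₂ : ℝ) : ℝ≥0∞ :=
  ∑' (a : ℕ) (b : ℕ), E ((a:ℝ)+(b:ℝ)+2) s₁ * E ((b:ℝ)+1) s₂

noncomputable def FW (t₁ t₂ t₃ : ℝ) : ℝ≥0∞ :=
  ∑' (l : ℕ) (m : ℕ) (n : ℕ),
    E ((l:ℝ)+(m:ℝ)+(n:ℝ)+3) t₁ * E ((l:ℝ)+1) t₂ * E ((m:ℝ)+1) t₃

noncomputable def TT (t₁ t₂ t₃ : ℝ) : ℝ≥0∞ :=
  ∑' (k : ℕ) (b : ℕ) (c : ℕ),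
    E ((k:ℝ)+1) t₁ * (E ((b:ℝ)+(c:ℝ)+2) t₂ * E ((c:ℝ)+1) t₃)

lemma swap12 (g : ℕ → ℕ → ℕ → ℝ≥0∞) :
    ∑' (x : ℕ) (y : ℕ) (z : ℕ), g x y z = ∑' (y : ℕ) (x : ℕ) (z : ℕ), g x y z :=
  ENNReal.tsum_comm

lemma swap23 (g : ℕ → ℕ → ℕ → ℝ≥0∞) :
    ∑' (x : ℕ) (y : ℕ) (z : ℕ), g x y z = ∑' (x : ℕ) (z : ℕ) (y : ℕ), g x y z :=
  tsum_congr fun _ => ENNReal.tsum_comm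

lemma range_decomp (f : ℕ → ℝ≥0∞) (b c : ℕ) :
    ∑ k ∈ range (b + c + 2), f k =
      (∑ k ∈ range c, f k) + f c + (∑ j ∈ range b, f (c + 1 + j)) + f (b + c + 1) := by
  induction b with
  | zero =>
      rw [show 0 + c + 2 = (c + 1) + 1 from by omega, sum_range_succ, sum_range_succ]
      simp [add_assoc]
  | succ b ih =>
      rw [show b + 1 + c + 2 = (b + c + 2) + 1 from by omega, sum_range_succ, ih,
        sum_range_succ]
      rw [show c + 1 + b = b + c + 1 from by omega, show b + 1 + c + 1 = b + c + 2 from by omega]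
      abel

/-- The stuffle (harmonic product) decomposition, in `ℝ≥0∞`. -/
lemma stuffle (t₁ t₂ t₃ : ℝ) :
    TT t₁ t₂ t₃ =
      F3 t₁ t₂ t₃ + F3 t₂ t₁ t₃ + F3 t₂ t₃ t₁ + F2 (t₁ + t₂) t₃ + F2 t₂ (t₁ + t₃) := by
  classical
  set A : ℕ → ℝ≥0∞ := fun k => E ((k:ℝ)+1) t₁ with hA
  set W : ℕ → ℕ → ℝ≥0∞ := fun b c => E ((b:ℝ)+(c:ℝ)+2) t₂ * E ((c:ℝ)+1) t₃ with hW
  have hpos : ∀ b c : ℕ, (0:ℝ) < (b:ℝ)+(c:ℝ)+2 := fun b c => by positivity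
  -- reorder so that k is innermost
  have step1 : TT t₁ t₂ t₃ = ∑' (b : ℕ) (c : ℕ), W b c * ∑' k, A k := by
    rw [TT, swap12 (fun k b c => A k * W b c)]
    refine tsum_congr fun b => ?_
    rw [ENNReal.tsum_comm (f := fun k c => A k * W b c)]
    refine tsum_congr fun c => ?_
    rw [ENNReal.tsum_mul_right, mul_comm]
  rw [step1]
  -- split the inner sum over k into five pieces
  have step2 : ∀ b c : ℕ, W b c * ∑' k, A k =
      W b c * ∑ k ∈ range c, A k
      + W b c * A c
      + W b c * ∑ j ∈ range b, A (c + 1 + j)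
      + W b c * A (b + c + 1)
      + W b c * ∑' a, A (a + (b + c + 2)) := by
    intro b c
    rw [tsum_split A (b + c + 2), range_decomp A b c]
    ring
  have step3 : (∑' (b : ℕ) (c : ℕ), W b c * ∑' k, A k) =
      (∑' (b : ℕ) (c : ℕ), W b c * ∑ k ∈ range c, A k)
      + (∑' (b : ℕ) (c : ℕ), W b c * A c)
      + (∑' (b : ℕ) (c : ℕ), W b c * ∑ j ∈ range b, A (c + 1 + j))
      + (∑' (b : ℕ) (c : ℕ), W b c * A (b + c + 1))
      + (∑' (b : ℕ) (c : ℕ), W b c * ∑' a, A (a + (b + c + 2))) := by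
    rw [← ENNReal.tsum_add, ← ENNReal.tsum_add, ← ENNReal.tsum_add, ← ENNReal.tsum_add]
    refine tsum_congr fun b => ?_
    rw [← ENNReal.tsum_add, ← ENNReal.tsum_add, ← ENNReal.tsum_add, ← ENNReal.tsum_add]
    exact tsum_congr fun c => step2 b c
  rw [step3]
  -- identify the five pieces
  have hlow : (∑' (b : ℕ) (c : ℕ), W b c * ∑ k ∈ range c, A k) = F3 t₂ t₃ t₁ := by
    have e : ∀ b : ℕ, (∑' c, W b c * ∑ k ∈ range c, A k)
        = ∑' (j : ℕ) (a : ℕ), W b (a + j + 1) * A j := by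
      intro b
      have := tsum_triangle (fun c j => W b c * A j)
      simp only [Finset.mul_sum] at this ⊢
      exact this
    rw [tsum_congr e, F3]
    rw [swap23 (fun b j a => W b (a + j + 1) * A j)]
    refine tsum_congr fun b => tsum_congr fun a => tsum_congr fun j => ?_
    simp only [hW, hA]
    push_cast
    ring_nf
  have hc : (∑' (b : ℕ) (c : ℕ), W b c * A c) = F2 t₂ (t₁ + t₃) := by
    rw [F2]
    refine tsum_congr fun b => tsum_congr fun c => ?_
    simp only [hW, hA]
    rw [mul_assoc, E_mul_same (by positivity) t₃ t₁, add_comm t₃ t₁]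
  have hmid : (∑' (b : ℕ) (c : ℕ), W b c * ∑ j ∈ range b, A (c + 1 + j)) = F3 t₂ t₁ t₃ := by
    simp only [Finset.mul_sum]
    rw [ENNReal.tsum_comm (f := fun b c => ∑ j ∈ range b, W b c * A (c + 1 + j))]
    have e : ∀ c : ℕ, (∑' b, ∑ j ∈ range b, W b c * A (c + 1 + j))
        = ∑' (j : ℕ) (a : ℕ), W (a + j + 1) c * A (c + 1 + j) :=
      fun c => tsum_triangle (fun b j => W b c * A (c + 1 + j))
    rw [tsum_congr e]
    rw [show (∑' (c : ℕ) (j : ℕ) (a : ℕ), W (a + j + 1) c * A (c + 1 + j))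
        = ∑' (j : ℕ) (c : ℕ) (a : ℕ), W (a + j + 1) c * A (c + 1 + j) from
      swap12 (fun c j a => W (a + j + 1) c * A (c + 1 + j))]
    rw [show (∑' (j : ℕ) (c : ℕ) (a : ℕ), W (a + j + 1) c * A (c + 1 + j))
        = ∑' (j : ℕ) (a : ℕ) (c : ℕ), W (a + j + 1) c * A (c + 1 + j) from
      swap23 (fun j c a => W (a + j + 1) c * A (c + 1 + j))]
    rw [show (∑' (j : ℕ) (a : ℕ) (c : ℕ), W (a + j + 1) c * A (c + 1 + j))
        = ∑' (a : ℕ) (j : ℕ) (c : ℕ), W (a + j + 1) c * A (c + 1 + j) from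
      swap12 (fun j a c => W (a + j + 1) c * A (c + 1 + j))]
    rw [F3]
    refine tsum_congr fun a => tsum_congr fun j => tsum_congr fun c => ?_
    simp only [hW, hA]
    push_cast
    ring_nf
  have htop : (∑' (b : ℕ) (c : ℕ), W b c * A (b + c + 1)) = F2 (t₁ + t₂) t₃ := by
    rw [F2]
    refine tsum_congr fun b => tsum_congr fun c => ?_
    simp only [hW, hA]
    have e : (((b + c + 1 : ℕ) : ℝ) + 1) = (b:ℝ) + (c:ℝ) + 2 := by push_cast; ring
    rw [E_congr t₁ e, mul_right_comm, mul_comm (E ((b:ℝ)+(c:ℝ)+2) t₂),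
      E_mul_same (by positivity) t₁ t₂]
  have htail : (∑' (b : ℕ) (c : ℕ), W b c * ∑' a, A (a + (b + c + 2))) = F3 t₁ t₂ t₃ := by
    rw [tsum_congr (fun b => tsum_congr fun c =>
      (ENNReal.tsum_mul_left (a := W b c) (f := fun a => A (a + (b + c + 2)))).symm)]
    rw [show (∑' (b : ℕ) (c : ℕ) (a : ℕ), W b c * A (a + (b + c + 2)))
        = ∑' (b : ℕ) (a : ℕ) (c : ℕ), W b c * A (a + (b + c + 2)) from
      swap23 (fun b c a => W b c * A (a + (b + c + 2)))]
    rw [show (∑' (b : ℕ) (a : ℕ) (c : ℕ), W b c * A (a + (b + c + 2)))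
        = ∑' (a : ℕ) (b : ℕ) (c : ℕ), W b c * A (a + (b + c + 2)) from
      swap12 (fun b a c => W b c * A (a + (b + c + 2)))]
    rw [F3]
    refine tsum_congr fun a => tsum_congr fun b => tsum_congr fun c => ?_
    simp only [hW, hA]
    push_cast
    ring_nf
  rw [hlow, hc, hmid, htop, htail]
  abel

lemma tsum3_add (f g : ℕ → ℕ → ℕ → ℝ≥0∞) :
    (∑' (k : ℕ) (b : ℕ) (c : ℕ), (f k b c + g k b c)) =
      (∑' (k : ℕ) (b : ℕ) (c : ℕ), f k b c) + (∑' (k : ℕ) (b : ℕ) (c : ℕ), g k b c) := by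
  rw [← ENNReal.tsum_add]
  refine tsum_congr fun k => ?_
  rw [← ENNReal.tsum_add]
  exact tsum_congr fun b => ENNReal.tsum_add

lemma tsum3_sum (s : Finset ℕ) (F : ℕ → ℕ → ℕ → ℕ → ℝ≥0∞) :
    (∑' (k : ℕ) (b : ℕ) (c : ℕ), ∑ i ∈ s, F i k b c) =
      ∑ i ∈ s, ∑' (k : ℕ) (b : ℕ) (c : ℕ), F i k b c := by
  calc (∑' (k : ℕ) (b : ℕ) (c : ℕ), ∑ i ∈ s, F i k b c)
      = ∑' (k : ℕ) (b : ℕ), ∑ i ∈ s, ∑' (c : ℕ), F i k b c :=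
        tsum_congr fun k => tsum_congr fun b => Summable.tsum_finsetSum fun _ _ => ENNReal.summable
    _ = ∑' (k : ℕ), ∑ i ∈ s, ∑' (b : ℕ) (c : ℕ), F i k b c :=
        tsum_congr fun k => Summable.tsum_finsetSum fun _ _ => ENNReal.summable
    _ = ∑ i ∈ s, ∑' (k : ℕ) (b : ℕ) (c : ℕ), F i k b c :=
        Summable.tsum_finsetSum fun _ _ => ENNReal.summable

lemma tsum3_mul_left (a : ℝ≥0∞) (f : ℕ → ℕ → ℕ → ℝ≥0∞) :
    (∑' (k : ℕ) (b : ℕ) (c : ℕ), a * f k b c) =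
      a * ∑' (k : ℕ) (b : ℕ) (c : ℕ), f k b c := by
  rw [← ENNReal.tsum_mul_left]
  refine tsum_congr fun k => ?_
  rw [← ENNReal.tsum_mul_left]
  exact tsum_congr fun b => ENNReal.tsum_mul_left

/-- The shuffle-type (partial fractions) decomposition, in `ℝ≥0∞`. -/
lemma shuffle (P Q : ℕ) (t₃ : ℝ) :
    (∑ i ∈ range (Q+1), (Nat.choose (P+i) i : ℝ≥0∞) *
        F3 ((P+1+i : ℕ) : ℝ) ((Q+1-i : ℕ) : ℝ) t₃)
      + (∑ i ∈ range (P+1), (Nat.choose (Q+i) i : ℝ≥0∞) *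
        FW ((Q+1+i : ℕ) : ℝ) ((P+1-i : ℕ) : ℝ) t₃)
      = TT ((P+1 : ℕ) : ℝ) ((Q+1 : ℕ) : ℝ) t₃ := by
  have pw : ∀ k b c : ℕ,
      E ((k:ℝ)+1) ((P+1:ℕ):ℝ) * (E ((b:ℝ)+(c:ℝ)+2) ((Q+1:ℕ):ℝ) * E ((c:ℝ)+1) t₃)
      = (∑ i ∈ range (Q+1), (Nat.choose (P+i) i : ℝ≥0∞) *
          (E ((k:ℝ)+(b:ℝ)+(c:ℝ)+3) ((P+1+i:ℕ):ℝ) * E ((b:ℝ)+(c:ℝ)+2) ((Q+1-i:ℕ):ℝ)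
            * E ((c:ℝ)+1) t₃))
        + (∑ i ∈ range (P+1), (Nat.choose (Q+i) i : ℝ≥0∞) *
          (E ((k:ℝ)+(b:ℝ)+(c:ℝ)+3) ((Q+1+i:ℕ):ℝ) * E ((k:ℝ)+1) ((P+1-i:ℕ):ℝ)
            * E ((c:ℝ)+1) t₃)) := by
    intro k b c
    have hx : (0:ℝ) < (k:ℝ)+1 := by positivity
    have hy : (0:ℝ) < (b:ℝ)+(c:ℝ)+2 := by positivity
    have hxy : (0:ℝ) < (k:ℝ)+(b:ℝ)+(c:ℝ)+3 := by positivity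
    have pf := pf_id ((k:ℝ)+1) ((b:ℝ)+(c:ℝ)+2) hx hy P Q
    rw [show (k:ℝ)+1+((b:ℝ)+(c:ℝ)+2) = (k:ℝ)+(b:ℝ)+(c:ℝ)+3 from by ring] at pf
    have e1 : E ((k:ℝ)+1) ((P+1:ℕ):ℝ) * E ((b:ℝ)+(c:ℝ)+2) ((Q+1:ℕ):ℝ)
        = (∑ i ∈ range (Q+1), (Nat.choose (P+i) i : ℝ≥0∞) *
            (E ((k:ℝ)+(b:ℝ)+(c:ℝ)+3) ((P+1+i:ℕ):ℝ) * E ((b:ℝ)+(c:ℝ)+2) ((Q+1-i:ℕ):ℝ)))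
          + (∑ i ∈ range (P+1), (Nat.choose (Q+i) i : ℝ≥0∞) *
            (E ((k:ℝ)+(b:ℝ)+(c:ℝ)+3) ((Q+1+i:ℕ):ℝ) * E ((k:ℝ)+1) ((P+1-i:ℕ):ℝ))) := by
      rw [E, E, ← ENNReal.ofReal_mul (Real.rpow_nonneg hx.le _), pf,
        ENNReal.ofReal_add (Finset.sum_nonneg fun i _ => by positivity)
          (Finset.sum_nonneg fun i _ => by positivity),
        ENNReal.ofReal_sum_of_nonneg (fun i _ => by positivity),
        ENNReal.ofReal_sum_of_nonneg (fun i _ => by positivity)]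
      congr 1
      · refine Finset.sum_congr rfl fun i _ => ?_
        rw [ENNReal.ofReal_mul (by positivity), ENNReal.ofReal_mul (by positivity),
          ENNReal.ofReal_natCast]
        rfl
      · refine Finset.sum_congr rfl fun i _ => ?_
        rw [ENNReal.ofReal_mul (by positivity), ENNReal.ofReal_mul (by positivity),
          ENNReal.ofReal_natCast]
        rfl
    rw [← mul_assoc, e1, add_mul, Finset.sum_mul, Finset.sum_mul]
    congr 1
    · exact Finset.sum_congr rfl fun i _ => by rw [mul_assoc]
    · exact Finset.sum_congr rfl fun i _ => by rw [mul_assoc]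
  rw [TT, tsum_congr (fun k => tsum_congr fun b => tsum_congr fun c => pw k b c)]
  rw [tsum3_add, tsum3_sum, tsum3_sum]
  congr 1
  · refine Finset.sum_congr rfl fun i _ => ?_
    rw [tsum3_mul_left]
    rfl
  · refine Finset.sum_congr rfl fun i _ => ?_
    rw [tsum3_mul_left]
    congr 1
    rw [FW]
    rw [show (∑' (l : ℕ) (m : ℕ) (n : ℕ),
          E ((l:ℝ)+(m:ℝ)+(n:ℝ)+3) ((Q+1+i:ℕ):ℝ) * E ((l:ℝ)+1) ((P+1-i:ℕ):ℝ)
            * E ((m:ℝ)+1) t₃)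
        = ∑' (l : ℕ) (n : ℕ) (m : ℕ),
          E ((l:ℝ)+(m:ℝ)+(n:ℝ)+3) ((Q+1+i:ℕ):ℝ) * E ((l:ℝ)+1) ((P+1-i:ℕ):ℝ)
            * E ((m:ℝ)+1) t₃ from
      swap23 (fun l m n => E ((l:ℝ)+(m:ℝ)+(n:ℝ)+3) ((Q+1+i:ℕ):ℝ)
        * E ((l:ℝ)+1) ((P+1-i:ℕ):ℝ) * E ((m:ℝ)+1) t₃)]
    refine tsum_congr fun k => tsum_congr fun b => tsum_congr fun c => ?_
    ring_nf

lemma TT_ne_top {t₁ t₂ t₃ : ℝ} (h₁ : 1 < t₁) (h₂ : 1 < t₂) (h₃ : 1 < t₃) :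
    TT t₁ t₂ t₃ ≠ ⊤ := by
  have hzW : (∑' (b : ℕ) (c : ℕ), E ((b:ℝ)+(c:ℝ)+2) t₂ * E ((c:ℝ)+1) t₃) ≠ ⊤ := by
    have hle : (∑' (b : ℕ) (c : ℕ), E ((b:ℝ)+(c:ℝ)+2) t₂ * E ((c:ℝ)+1) t₃)
        ≤ ∑' (b : ℕ) (c : ℕ), E ((b:ℝ)+1) t₂ * E ((c:ℝ)+1) t₃ := by
      refine Summable.tsum_le_tsum (fun b => Summable.tsum_le_tsum (fun c => ?_) ENNReal.summable
        ENNReal.summable) ENNReal.summable ENNReal.summable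
      exact mul_le_mul_left (E_le (by positivity) (by push_cast; linarith [Nat.cast_nonneg (α := ℝ) c]) (by linarith)) _
    have heq : (∑' (b : ℕ) (c : ℕ), E ((b:ℝ)+1) t₂ * E ((c:ℝ)+1) t₃)
        = (∑' (b : ℕ), E ((b:ℝ)+1) t₂) * (∑' (c : ℕ), E ((c:ℝ)+1) t₃) := by
      rw [tsum_congr (fun b => ENNReal.tsum_mul_left), ENNReal.tsum_mul_right]
    exact ne_top_of_le_ne_top
      (by rw [heq] at hle ⊢; exact ENNReal.mul_ne_top (zeta_ne_top h₂) (zeta_ne_top h₃))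
      hle
  have heq2 : TT t₁ t₂ t₃ = (∑' (k : ℕ), E ((k:ℝ)+1) t₁) *
      (∑' (b : ℕ) (c : ℕ), E ((b:ℝ)+(c:ℝ)+2) t₂ * E ((c:ℝ)+1) t₃) := by
    rw [TT]
    simp only [ENNReal.tsum_mul_left]
    exact ENNReal.tsum_mul_right
  rw [heq2]
  exact ENNReal.mul_ne_top (zeta_ne_top h₁) hzW

lemma zr3_eq (s₁ s₂ s₃ : ℝ) (h : F3 s₁ s₂ s₃ ≠ ⊤) :
    zr3 s₁ s₂ s₃ = (F3 s₁ s₂ s₃).toReal := by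
  have he : (∑' (a : ℕ) (b : ℕ) (c : ℕ), ENNReal.ofReal
        (((a:ℝ)+(b:ℝ)+(c:ℝ)+3) ^ (-s₁) * ((b:ℝ)+(c:ℝ)+2) ^ (-s₂) * ((c:ℝ)+1) ^ (-s₃)))
      = F3 s₁ s₂ s₃ := by
    rw [F3]
    refine tsum_congr fun a => tsum_congr fun b => tsum_congr fun c => ?_
    rw [ENNReal.ofReal_mul (by positivity), ENNReal.ofReal_mul (by positivity)]
    rfl
  rw [zr3, transfer3 (fun a b c =>
      ((a:ℝ)+(b:ℝ)+(c:ℝ)+3) ^ (-s₁) * ((b:ℝ)+(c:ℝ)+2) ^ (-s₂) * ((c:ℝ)+1) ^ (-s₃))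
    (fun a b c => by positivity) (he ▸ h), he]

lemma zr2_eq (s₁ s₂ : ℝ) (h : F2 s₁ s₂ ≠ ⊤) :
    zr2 s₁ s₂ = (F2 s₁ s₂).toReal := by
  have he : (∑' (a : ℕ) (b : ℕ), ENNReal.ofReal
        (((a:ℝ)+(b:ℝ)+2) ^ (-s₁) * ((b:ℝ)+1) ^ (-s₂))) = F2 s₁ s₂ := by
    rw [F2]
    refine tsum_congr fun a => tsum_congr fun b => ?_
    rw [ENNReal.ofReal_mul (by positivity)]
    rfl
  rw [zr2, transfer2 (fun a b => ((a:ℝ)+(b:ℝ)+2) ^ (-s₁) * ((b:ℝ)+1) ^ (-s₂))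
    (fun a b => by positivity) (he ▸ h), he]

lemma fw_eq (t₁ t₂ t₃ : ℝ) (h : FW t₁ t₂ t₃ ≠ ⊤) :
    (∑' (l : ℕ) (m : ℕ) (n : ℕ),
      ((l:ℝ)+(m:ℝ)+(n:ℝ)+3) ^ (-t₁) * ((l:ℝ)+1) ^ (-t₂) * ((m:ℝ)+1) ^ (-t₃))
      = (FW t₁ t₂ t₃).toReal := by
  have he : (∑' (l : ℕ) (m : ℕ) (n : ℕ), ENNReal.ofReal
        (((l:ℝ)+(m:ℝ)+(n:ℝ)+3) ^ (-t₁) * ((l:ℝ)+1) ^ (-t₂) * ((m:ℝ)+1) ^ (-t₃)))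
      = FW t₁ t₂ t₃ := by
    rw [FW]
    refine tsum_congr fun l => tsum_congr fun m => tsum_congr fun n => ?_
    rw [ENNReal.ofReal_mul (by positivity), ENNReal.ofReal_mul (by positivity)]
    rfl
  rw [transfer3 (fun l m n =>
      ((l:ℝ)+(m:ℝ)+(n:ℝ)+3) ^ (-t₁) * ((l:ℝ)+1) ^ (-t₂) * ((m:ℝ)+1) ^ (-t₃))
    (fun l m n => by positivity) (he ▸ h), he]


theorem functional_double_shuffle (p₁ p₂ : ℕ) (hp₁ : 2 ≤ p₁) (hp₂ : 2 ≤ p₂)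
    (s : ℝ) (hs : 1 < s) :
    (∑ i ∈ Finset.range p₂, (Nat.choose (p₁ - 1 + i) i : ℝ) *
        zr3 ((p₁ + i : ℕ) : ℝ) ((p₂ - i : ℕ) : ℝ) s) +
      (∑ i ∈ Finset.range p₁, (Nat.choose (p₂ - 1 + i) i : ℝ) *
        ∑' (l : ℕ) (m : ℕ) (n : ℕ),
          ((l : ℝ) + (m : ℝ) + (n : ℝ) + 3) ^ (-((p₂ + i : ℕ) : ℝ)) *
            ((l : ℝ) + 1) ^ (-((p₁ - i : ℕ) : ℝ)) * ((m : ℝ) + 1) ^ (-s)) =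
    zr3 (p₁ : ℝ) (p₂ : ℝ) s + zr3 (p₂ : ℝ) (p₁ : ℝ) s + zr3 (p₂ : ℝ) s (p₁ : ℝ) +
      zr2 ((p₁ + p₂ : ℕ) : ℝ) s + zr2 (p₂ : ℝ) ((p₁ : ℝ) + s) := by
  obtain ⟨P, rfl⟩ : ∃ P, p₁ = P + 1 := ⟨p₁ - 1, by omega⟩
  obtain ⟨Q, rfl⟩ : ∃ Q, p₂ = Q + 1 := ⟨p₂ - 1, by omega⟩
  have h1P : (1:ℝ) < ((P+1:ℕ):ℝ) := by exact_mod_cast (by omega : 1 < P + 1)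
  have h1Q : (1:ℝ) < ((Q+1:ℕ):ℝ) := by exact_mod_cast (by omega : 1 < Q + 1)
  have hT : TT ((P+1:ℕ):ℝ) ((Q+1:ℕ):ℝ) s ≠ ⊤ := TT_ne_top h1P h1Q hs
  have hstuf := stuffle ((P+1:ℕ):ℝ) ((Q+1:ℕ):ℝ) s
  have hshuf := shuffle P Q s
  -- finiteness of the stuffle pieces
  have hfin : F3 ((P+1:ℕ):ℝ) ((Q+1:ℕ):ℝ) s + F3 ((Q+1:ℕ):ℝ) ((P+1:ℕ):ℝ) s
      + F3 ((Q+1:ℕ):ℝ) s ((P+1:ℕ):ℝ) + F2 (((P+1:ℕ):ℝ) + ((Q+1:ℕ):ℝ)) s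
      + F2 ((Q+1:ℕ):ℝ) (((P+1:ℕ):ℝ) + s) ≠ ⊤ := by rw [← hstuf]; exact hT
  simp only [ne_eq, ENNReal.add_eq_top, not_or] at hfin
  obtain ⟨⟨⟨⟨hA, hB⟩, hC⟩, hD⟩, hE5⟩ := hfin
  -- finiteness of the shuffle pieces
  have hone : ∀ n k : ℕ, (1:ℝ≥0∞) ≤ (Nat.choose (n + k) k : ℝ≥0∞) := by
    intro n k
    exact_mod_cast Nat.succ_le_of_lt (Nat.choose_pos (Nat.le_add_left k n))
  have hfin1 : ∀ i ∈ Finset.range (Q+1), F3 ((P+1+i:ℕ):ℝ) ((Q+1-i:ℕ):ℝ) s ≠ ⊤ := by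
    intro i hi
    refine ne_top_of_le_ne_top hT ?_
    calc F3 ((P+1+i:ℕ):ℝ) ((Q+1-i:ℕ):ℝ) s
        ≤ (Nat.choose (P+i) i : ℝ≥0∞) * F3 ((P+1+i:ℕ):ℝ) ((Q+1-i:ℕ):ℝ) s := by
          nth_rewrite 1 [← one_mul (F3 ((P+1+i:ℕ):ℝ) ((Q+1-i:ℕ):ℝ) s)]
          exact mul_le_mul_left (hone P i) _
      _ ≤ ∑ j ∈ Finset.range (Q+1), (Nat.choose (P+j) j : ℝ≥0∞) *
            F3 ((P+1+j:ℕ):ℝ) ((Q+1-j:ℕ):ℝ) s :=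
          Finset.single_le_sum (f := fun j => (Nat.choose (P+j) j : ℝ≥0∞) *
            F3 ((P+1+j:ℕ):ℝ) ((Q+1-j:ℕ):ℝ) s) (fun j _ => zero_le) hi
      _ ≤ TT ((P+1:ℕ):ℝ) ((Q+1:ℕ):ℝ) s := le_self_add.trans_eq hshuf
  have hfin2 : ∀ i ∈ Finset.range (P+1), FW ((Q+1+i:ℕ):ℝ) ((P+1-i:ℕ):ℝ) s ≠ ⊤ := by
    intro i hi
    refine ne_top_of_le_ne_top hT ?_
    calc FW ((Q+1+i:ℕ):ℝ) ((P+1-i:ℕ):ℝ) s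
        ≤ (Nat.choose (Q+i) i : ℝ≥0∞) * FW ((Q+1+i:ℕ):ℝ) ((P+1-i:ℕ):ℝ) s := by
          nth_rewrite 1 [← one_mul (FW ((Q+1+i:ℕ):ℝ) ((P+1-i:ℕ):ℝ) s)]
          exact mul_le_mul_left (hone Q i) _
      _ ≤ ∑ j ∈ Finset.range (P+1), (Nat.choose (Q+j) j : ℝ≥0∞) *
            FW ((Q+1+j:ℕ):ℝ) ((P+1-j:ℕ):ℝ) s :=
          Finset.single_le_sum (f := fun j => (Nat.choose (Q+j) j : ℝ≥0∞) *
            FW ((Q+1+j:ℕ):ℝ) ((P+1-j:ℕ):ℝ) s) (fun j _ => zero_le) hi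
      _ ≤ TT ((P+1:ℕ):ℝ) ((Q+1:ℕ):ℝ) s := le_add_self.trans_eq hshuf
  -- transfer to the real-valued statement
  simp only [Nat.add_sub_cancel]
  have L1 : (∑ i ∈ Finset.range (Q+1), (Nat.choose (P + i) i : ℝ) *
        zr3 ((P+1+i:ℕ):ℝ) ((Q+1-i:ℕ):ℝ) s)
      = (∑ i ∈ Finset.range (Q+1), (Nat.choose (P+i) i : ℝ≥0∞) *
          F3 ((P+1+i:ℕ):ℝ) ((Q+1-i:ℕ):ℝ) s).toReal := by
    rw [ENNReal.toReal_sum (fun i hi =>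
      ENNReal.mul_ne_top (ENNReal.natCast_ne_top _) (hfin1 i hi))]
    refine Finset.sum_congr rfl fun i hi => ?_
    rw [ENNReal.toReal_mul, ENNReal.toReal_natCast _, zr3_eq _ _ _ (hfin1 i hi)]
  have L2 : (∑ i ∈ Finset.range (P+1), (Nat.choose (Q + i) i : ℝ) *
        ∑' (l : ℕ) (m : ℕ) (n : ℕ),
          ((l : ℝ) + (m : ℝ) + (n : ℝ) + 3) ^ (-((Q+1+i : ℕ) : ℝ)) *
            ((l : ℝ) + 1) ^ (-((P+1-i : ℕ) : ℝ)) * ((m : ℝ) + 1) ^ (-s))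
      = (∑ i ∈ Finset.range (P+1), (Nat.choose (Q+i) i : ℝ≥0∞) *
          FW ((Q+1+i:ℕ):ℝ) ((P+1-i:ℕ):ℝ) s).toReal := by
    rw [ENNReal.toReal_sum (fun i hi =>
      ENNReal.mul_ne_top (ENNReal.natCast_ne_top _) (hfin2 i hi))]
    refine Finset.sum_congr rfl fun i hi => ?_
    rw [ENNReal.toReal_mul, ENNReal.toReal_natCast _, fw_eq _ _ _ (hfin2 i hi)]
  rw [L1, L2]
  have ecast : ((P+1+(Q+1):ℕ):ℝ) = ((P+1:ℕ):ℝ) + ((Q+1:ℕ):ℝ) := by push_cast; ring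
  rw [zr3_eq _ _ _ hA, zr3_eq _ _ _ hB, zr3_eq _ _ _ hC, ecast, zr2_eq _ _ hD,
    zr2_eq _ _ hE5]
  have hXY : (∑ i ∈ Finset.range (Q+1), (Nat.choose (P+i) i : ℝ≥0∞) *
        F3 ((P+1+i:ℕ):ℝ) ((Q+1-i:ℕ):ℝ) s)
      + (∑ i ∈ Finset.range (P+1), (Nat.choose (Q+i) i : ℝ≥0∞) *
          FW ((Q+1+i:ℕ):ℝ) ((P+1-i:ℕ):ℝ) s) ≠ ⊤ := by rw [hshuf]; exact hT
  simp only [ne_eq, ENNReal.add_eq_top, not_or] at hXY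
  rw [← ENNReal.toReal_add hXY.1 hXY.2,
    ← ENNReal.toReal_add hA hB,
    ← ENNReal.toReal_add (ENNReal.add_ne_top.2 ⟨hA, hB⟩) hC,
    ← ENNReal.toReal_add (ENNReal.add_ne_top.2 ⟨ENNReal.add_ne_top.2 ⟨hA, hB⟩, hC⟩) hD,
    ← ENNReal.toReal_add
      (ENNReal.add_ne_top.2 ⟨ENNReal.add_ne_top.2 ⟨ENNReal.add_ne_top.2 ⟨hA, hB⟩, hC⟩, hD⟩) hE5]
  rw [hshuf, hstuf]
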